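/- Let A be an n × n Hermitian matrix, M > 0, and 1 ≤ q ≤ n − 1. If the sum of any q eigenvalues of A is at least M, then there exists an index t with 1 ≤ t ≤ n and A_{tt} ≥ M/q. -/

import Mathlib

open Finset

theorem stmt4 {n q : ℕ} (hq1 : 1 ≤ q) (hqn : q ≤ n - 1) (M : ℝ) (hM : 0 < M)
    (A : Matrix (Fin n) (Fin n) ℂ) (hA : A.IsHermitian)
    (h : ∀ σ : Fin q → Fin n, Function.Injective σ → M ≤ ∑ s, hA.eigenvalues (σ s)) :
    ∃ t : Fin n, M / q ≤ (A t t).re := by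
  have hn : 1 ≤ n := by omega
  have hqn' : q ≤ n := by omega
  have hq0 : (0:ℝ) < q := by exact_mod_cast hq1
  set e := hA.eigenvalues with he
  -- trace = sum of eigenvalues
  have htr : A.trace = ∑ i, (e i : ℂ) := by
    conv_lhs => rw [hA.spectral_theorem, Unitary.conjStarAlgAut_apply]
    rw [Matrix.trace_mul_cycle]
    rw [show (star (hA.eigenvectorUnitary : Matrix (Fin n) (Fin n) ℂ)) *
        (hA.eigenvectorUnitary : Matrix (Fin n) (Fin n) ℂ) = 1 from
      Matrix.UnitaryGroup.star_mul_self _]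
    rw [one_mul, Matrix.trace_diagonal]
    rfl
  have hdiag : ∑ t, (A t t).re = ∑ i, e i := by
    have := congrArg Complex.re htr
    simpa [Matrix.trace, Matrix.diag, Complex.re_sum] using this
  -- sorted eigenvalues
  set π := Tuple.sort e with hπ
  set μ := e ∘ π with hμ
  have hmono : Monotone μ := Tuple.monotone_sort e
  -- the q smallest eigenvalues
  set σ : Fin q → Fin n := fun j => π (Fin.castLE hqn' j) with hσ
  have hσinj : Function.Injective σ :=
    π.injective.comp (Fin.castLE_injective hqn')
  have hMsum : M ≤ ∑ j : Fin q, μ (Fin.castLE hqn' j) := h σ hσinj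
  -- index of the q-th smallest eigenvalue
  set k : Fin n := ⟨q - 1, by omega⟩ with hk
  have hk_ge : M / q ≤ μ k := by
    rw [div_le_iff₀ hq0]
    have hle : ∑ j : Fin q, μ (Fin.castLE hqn' j) ≤ ∑ _j : Fin q, μ k := by
      apply Finset.sum_le_sum
      intro j _
      apply hmono
      simp only [Fin.le_def, Fin.coe_castLE, hk, Fin.val_mk]
      omega
    have : ∑ _j : Fin q, μ k = μ k * q := by
      simp [mul_comm]
    linarith [hMsum, hle.trans_eq this]
  -- split the total sum
  set s : Finset (Fin n) := (univ : Finset (Fin q)).image (Fin.castLE hqn') with hs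
  have hcard_s : s.card = q := by
    rw [hs, Finset.card_image_of_injective _ (Fin.castLE_injective hqn')]
    simp
  have hsum_s : M ≤ ∑ i ∈ s, μ i := by
    rw [hs, Finset.sum_image (by intro a _ b _ hab; exact Fin.castLE_injective hqn' hab)]
    exact hMsum
  have hsum_sc : (n - q : ℕ) * (M / q) ≤ ∑ i ∈ sᶜ, μ i := by
    have hcardc : sᶜ.card = n - q := by
      rw [Finset.card_compl, hcard_s]
      simp
    calc (n - q : ℕ) * (M / q) = ∑ _i ∈ sᶜ, (M / q) := by
          rw [Finset.sum_const, hcardc, nsmul_eq_mul]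
      _ ≤ ∑ i ∈ sᶜ, μ i := by
          apply Finset.sum_le_sum
          intro i hi
          have hiq : q ≤ i.val := by
            by_contra hlt
            push_neg at hlt
            have : i ∈ s := by
              rw [hs]
              exact Finset.mem_image.2 ⟨⟨i.val, hlt⟩, Finset.mem_univ _, by
                simp [Fin.ext_iff]⟩
            simp [Finset.mem_compl] at hi
            exact hi this
          exact hk_ge.trans (hmono (by simp only [Fin.le_def, hk]; omega))
  have htotal : (n : ℝ) * (M / q) ≤ ∑ i, e i := by
    have hμsum : ∑ i, μ i = ∑ i, e i := Equiv.sum_comp π e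
    have hsplit : ∑ i ∈ s, μ i + ∑ i ∈ sᶜ, μ i = ∑ i, μ i :=
      Finset.sum_add_sum_compl s μ
    have hcast : ((n - q : ℕ) : ℝ) = (n : ℝ) - q := by
      push_cast [hqn']; ring
    have hMq : M = q * (M / q) := by field_simp
    nlinarith [hsum_s, hsum_sc]
  -- conclude
  have : ∑ _t : Fin n, (M / q) ≤ ∑ t, (A t t).re := by
    rw [hdiag, Finset.sum_const, Finset.card_univ, Fintype.card_fin, nsmul_eq_mul]
    exact htotal
  obtain ⟨t, _, ht⟩ := Finset.exists_le_of_sum_le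
    (Finset.univ_nonempty_iff.2 ⟨⟨0, hn⟩⟩) this
  exact ⟨t, ht⟩
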